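/- arXiv:0812.2588 — 4 statements merged into one kernel-verified Lean document; each statement's English description precedes it below -/
import Mathlib

section
/- Let n, m be natural numbers with n, m ≥ 1. The system of equations y = x + 2^(1/(2m)), x^(2n) + y^(2n) = 1, x^(2n-1) + y^(2n-1) = 0 has a real solution (x, y) if and only if n = m = 1, in which case the unique solution is (x, y) = (-√2/2, √2/2). -/
lemma key (n m : ℕ) (hn : 1 ≤ n) (hm : 1 ≤ m) (x y : ℝ)
    (h1 : y = x + (2:ℝ) ^ (1 / (2 * (m:ℝ))))
    (h2 : x^(2*n) + y^(2*n) = 1) (h3 : x^(2*n-1) + y^(2*n-1) = 0) :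
    n = 1 ∧ m = 1 ∧ x = -Real.sqrt 2 / 2 ∧ y = Real.sqrt 2 / 2 := by
  set c : ℝ := (2:ℝ) ^ (1 / (2 * (m:ℝ))) with hc
  have hodd : Odd (2*n-1) := ⟨n-1, by omega⟩
  have hyx : y = -x := by
    have hinj := Odd.strictMono_pow (R := ℝ) hodd |>.injective
    exact hinj (show y ^ (2*n-1) = (-x) ^ (2*n-1) by rw [hodd.neg_pow]; linarith)
  have hcpos : 0 < c := Real.rpow_pos_of_pos (by norm_num) _
  have hx : x = -(c/2) := by rw [hyx] at h1; linarith
  have he : Even (2*n) := ⟨n, by ring⟩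
  have hx2 : x ^ (2*n) = (c/2) ^ (2*n) := by rw [hx]; exact he.neg_pow _
  have hy2 : y ^ (2*n) = (c/2) ^ (2*n) := by rw [hyx, he.neg_pow, hx2]
  have hhalf : (c/2) ^ (2*n) = 1/2 := by rw [hx2, hy2] at h2; linarith
  have hm0 : (m:ℝ) ≠ 0 := Nat.cast_ne_zero.mpr (by omega)
  have hcpow : c ^ (2*n) = (2:ℝ) ^ ((n:ℝ)/(m:ℝ)) := by
    rw [hc, ← Real.rpow_natCast _ (2*n), ← Real.rpow_mul (by norm_num)]
    congr 1
    push_cast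
    field_simp
  have hkey : (2:ℝ) ^ ((n:ℝ)/(m:ℝ)) = (2:ℝ) ^ ((2*(n:ℝ) - 1 : ℝ)) := by
    have h2np : (0:ℝ) < 2^(2*n) := by positivity
    have h' : (2:ℝ) ^ ((n:ℝ)/(m:ℝ)) = 2^(2*n) / 2 := by
      rw [div_pow, hcpow] at hhalf
      field_simp at hhalf ⊢
      linarith
    rw [h', Real.rpow_sub (by norm_num), Real.rpow_one,
      show ((2:ℝ)*n : ℝ) = ((2*n : ℕ) : ℝ) by push_cast; ring, Real.rpow_natCast]
  have hexp : (n:ℝ)/(m:ℝ) = 2*(n:ℝ) - 1 :=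
    le_antisymm ((Real.rpow_le_rpow_left_iff (by norm_num)).mp hkey.le)
      ((Real.rpow_le_rpow_left_iff (by norm_num)).mp hkey.ge)
  have hnm : n = m * (2*n - 1) := by
    have : (n:ℝ) = (m:ℝ) * (2*(n:ℝ) - 1) := by field_simp at hexp; linarith
    have : (n:ℝ) = ((m * (2*n-1) : ℕ) : ℝ) := by push_cast [Nat.cast_sub (by omega : 1 ≤ 2*n)]; linarith
    exact_mod_cast this
  have hn1 : n = 1 := by
    have h1' : 2*n - 1 ≤ m * (2*n-1) := Nat.le_mul_of_pos_left _ (by omega)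
    omega
  have hm1 : m = 1 := by rw [hn1] at hnm; omega
  have hcs : c = Real.sqrt 2 := by
    rw [hc, hm1, Real.sqrt_eq_rpow]; norm_num
  refine ⟨hn1, hm1, by rw [hx, hcs]; ring, by rw [hyx, hx, hcs]; ring⟩

theorem stmt2 (n m : ℕ) (hn : 1 ≤ n) (hm : 1 ≤ m) :
    ((∃ x y : ℝ, y = x + (2:ℝ) ^ (1 / (2 * (m:ℝ))) ∧
        x^(2*n) + y^(2*n) = 1 ∧ x^(2*n-1) + y^(2*n-1) = 0)
      ↔ (n = 1 ∧ m = 1)) ∧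
    (n = 1 → m = 1 → ∀ x y : ℝ,
      (y = x + (2:ℝ) ^ (1 / (2 * (m:ℝ))) ∧
        x^(2*n) + y^(2*n) = 1 ∧ x^(2*n-1) + y^(2*n-1) = 0)
      ↔ (x = -Real.sqrt 2 / 2 ∧ y = Real.sqrt 2 / 2)) := by
  have hs2 : Real.sqrt 2 ^ 2 = 2 := Real.sq_sqrt (by norm_num)
  constructor
  · constructor
    · rintro ⟨x, y, h1, h2, h3⟩
      obtain ⟨a, b, _, _⟩ := key n m hn hm x y h1 h2 h3
      exact ⟨a, b⟩
    · rintro ⟨rfl, rfl⟩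
      refine ⟨-Real.sqrt 2 / 2, Real.sqrt 2 / 2, ?_, ?_, ?_⟩
      · have : (2:ℝ) ^ (1 / (2 * ((1:ℕ):ℝ))) = Real.sqrt 2 := by
          rw [Real.sqrt_eq_rpow]; norm_num
        rw [this]; ring
      · norm_num; nlinarith
      · norm_num; ring
  · rintro rfl rfl x y
    constructor
    · rintro ⟨h1, h2, h3⟩
      obtain ⟨_, _, hx, hy⟩ := key 1 1 le_rfl le_rfl x y h1 h2 h3
      exact ⟨hx, hy⟩
    · rintro ⟨rfl, rfl⟩
      refine ⟨?_, ?_, ?_⟩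
      · have : (2:ℝ) ^ (1 / (2 * ((1:ℕ):ℝ))) = Real.sqrt 2 := by
          rw [Real.sqrt_eq_rpow]; norm_num
        rw [this]; ring
      · norm_num; nlinarith
      · norm_num; ring
end

section
/- Let n, m ≥ 1 be natural numbers. If real numbers x, y satisfy x^(2n-1) + y^(2n-1) = 0, y = x + 2^(1/(2m)), and x^(2n) + y^(2n) = 1, then 2n·(2m - 1) = 2m; consequently the only solution in natural numbers is n = m = 1. -/
theorem stmt3 (n m : ℕ) (hn : 1 ≤ n) (hm : 1 ≤ m) (x y : ℝ)
    (h1 : x^(2*n-1) + y^(2*n-1) = 0)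
    (h2 : y = x + (2:ℝ) ^ (1 / (2 * (m:ℝ))))
    (h3 : x^(2*n) + y^(2*n) = 1) :
    2*n*(2*m - 1) = 2*m ∧ n = 1 ∧ m = 1 := by
  have hodd : Odd (2*n-1) := ⟨n-1, by omega⟩
  have hyx : y = -x := by
    have h1' : y ^ (2*n-1) = (-x) ^ (2*n-1) := by
      rw [hodd.neg_pow]; linarith
    exact (Odd.strictMono_pow hodd).injective h1'
  have hm0 : (m:ℝ) ≠ 0 := Nat.cast_ne_zero.mpr (by omega)
  set r : ℝ := 1 / (2 * (m:ℝ)) with hr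
  have hx : x = -(2:ℝ) ^ (r - 1) := by
    have h2' : (2:ℝ) ^ r = -2*x := by rw [hyx] at h2; linarith
    have : (2:ℝ) ^ (r - 1) = (2:ℝ) ^ r / 2 := by
      rw [Real.rpow_sub (by norm_num), Real.rpow_one]
    rw [this, h2']; ring
  have hx2n : x ^ (2*n) = (2:ℝ) ^ ((r - 1) * (2*n : ℕ)) := by
    rw [hx, Even.neg_pow ⟨n, by ring⟩, ← Real.rpow_natCast ((2:ℝ) ^ (r-1)) (2*n),
      ← Real.rpow_mul (by norm_num)]
  have hhalf : x ^ (2*n) = (2:ℝ) ^ (-1 : ℝ) := by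
    have : y ^ (2*n) = x ^ (2*n) := by rw [hyx, Even.neg_pow ⟨n, by ring⟩]
    rw [this] at h3
    rw [Real.rpow_neg_one]
    linarith
  have hexp : (r - 1) * (2*n : ℕ) = -1 := by
    have h := hx2n.symm.trans hhalf
    have inj : ∀ a b : ℝ, (2:ℝ) ^ a = (2:ℝ) ^ b → a = b := by
      intro a b hab
      have h1 := (Real.rpow_le_rpow_left_iff (x := 2) (by norm_num)).mp hab.le
      have h2 := (Real.rpow_le_rpow_left_iff (x := 2) (by norm_num)).mp hab.ge
      linarith
    exact inj _ _ h
  -- convert to: 2n(2m-1) = 2m over ℕ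
  have key : 2*n*(2*m-1) = 2*m := by
    have hcast : ((2*n : ℕ) : ℝ) * (2*(m:ℝ) - 1) = 2*(m:ℝ) := by
      rw [hr] at hexp
      field_simp at hexp
      push_cast at hexp ⊢
      nlinarith [hexp]
    have : (2*n) * (2*m-1) = 2*m := by
      have hmm : (1:ℕ) ≤ 2*m := by omega
      have : ((2*n*(2*m-1) : ℕ) : ℝ) = ((2*m : ℕ) : ℝ) := by
        push_cast [Nat.cast_sub hmm]
        push_cast at hcast
        linarith
      exact_mod_cast this
    omega
  have hm1 : m = 1 := by 
    have hge : 2*(2*m-1) ≤ 2*n*(2*m-1) := Nat.mul_le_mul_right _ (by omega)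
    omega
  have hn1 : n = 1 := by subst hm1; omega
  exact ⟨key, hn1, hm1⟩
end

section
/- For every natural number n ≥ 1, the maximum of the function (x, y) ↦ y - x over the curve {(x,y) : x^(2n) + y^(2n) = 1} equals 2^((2n-1)/(2n)), and it is attained exactly at the point (-2^(-1/(2n)), 2^(-1/(2n))). -/
open Real

lemma midpt_pow_le' (n : ℕ) (a b : ℝ) :
    ((a + b) / 2) ^ (2 * n) ≤ (a ^ (2 * n) + b ^ (2 * n)) / 2 := by
  have h := (Even.convexOn_pow (n := 2 * n) (even_two_mul n)).2
    (Set.mem_univ a) (Set.mem_univ b)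
    (by norm_num : (0:ℝ) ≤ 1/2) (by norm_num : (0:ℝ) ≤ 1/2) (by norm_num)
  simp only [smul_eq_mul] at h
  have e1 : (a + b) / 2 = 1/2 * a + 1/2 * b := by ring
  rw [e1]
  linarith

lemma midpt_pow_eq' (n : ℕ) (hn : 1 ≤ n) (a b : ℝ)
    (h : ((a + b) / 2) ^ (2 * n) = (a ^ (2 * n) + b ^ (2 * n)) / 2) : a = b := by
  by_contra hab
  have hs := (Even.strictConvexOn_pow (even_two_mul n) (by omega)).2
    (Set.mem_univ a) (Set.mem_univ b) hab
    (by norm_num : (0:ℝ) < 1/2) (by norm_num : (0:ℝ) < 1/2) (by norm_num)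
  simp only [smul_eq_mul] at hs
  have e1 : (a + b) / 2 = 1/2 * a + 1/2 * b := by ring
  rw [e1] at h
  linarith

theorem stmt4 (n : ℕ) (hn : 1 ≤ n) :
    (∀ x y : ℝ, x^(2*n) + y^(2*n) = 1 →
      y - x ≤ (2:ℝ) ^ ((2*(n:ℝ) - 1) / (2*(n:ℝ)))) ∧
    ((-(2:ℝ) ^ (-(1 / (2*(n:ℝ)))))^(2*n) + ((2:ℝ) ^ (-(1 / (2*(n:ℝ)))))^(2*n) = 1) ∧
    (((2:ℝ) ^ (-(1 / (2*(n:ℝ))))) - (-(2:ℝ) ^ (-(1 / (2*(n:ℝ)))))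
      = (2:ℝ) ^ ((2*(n:ℝ) - 1) / (2*(n:ℝ)))) ∧
    (∀ x y : ℝ, x^(2*n) + y^(2*n) = 1 →
      y - x = (2:ℝ) ^ ((2*(n:ℝ) - 1) / (2*(n:ℝ))) →
      x = -(2:ℝ) ^ (-(1 / (2*(n:ℝ)))) ∧ y = (2:ℝ) ^ (-(1 / (2*(n:ℝ))))) := by
  have hn1 : (1:ℝ) ≤ (n:ℝ) := by exact_mod_cast hn
  have hm : (0:ℝ) < 2 * (n:ℝ) := by linarith
  set c : ℝ := (2:ℝ) ^ (-(1 / (2*(n:ℝ)))) with hc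
  have hc0 : 0 < c := Real.rpow_pos_of_pos two_pos _
  have hcpow : c ^ (2 * n) = 1 / 2 := by
    rw [hc, ← Real.rpow_natCast ((2:ℝ) ^ (-(1 / (2*(n:ℝ))))) (2*n),
      ← Real.rpow_mul (by norm_num : (0:ℝ) ≤ 2)]
    rw [show (-(1 / (2*(n:ℝ)))) * ((2*n : ℕ) : ℝ) = -1 by push_cast; field_simp]
    rw [Real.rpow_neg_one]
    norm_num
  have hpe : (2:ℝ) ^ ((2*(n:ℝ) - 1) / (2*(n:ℝ))) = 2 * c := by
    rw [show (2*(n:ℝ) - 1) / (2*(n:ℝ)) = 1 + (-(1 / (2*(n:ℝ)))) by field_simp; ring]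
    rw [Real.rpow_add two_pos, Real.rpow_one, hc]
  have hnegpow : ∀ t : ℝ, (-t) ^ (2*n) = t ^ (2*n) := fun t => (even_two_mul n).neg_pow t
  refine ⟨?_, ?_, ?_, ?_⟩
  · intro x y hxy
    rw [hpe]
    have key := midpt_pow_le' n (-x) y
    rw [hnegpow x, hxy] at key
    rcases le_or_gt (y - x) 0 with h | h
    · nlinarith
    · have ht : (0:ℝ) ≤ (y - x) / 2 := by linarith
      have hle : ((y - x) / 2) ^ (2*n) ≤ c ^ (2*n) := by
        rw [hcpow]
        calc ((y - x) / 2) ^ (2*n) = ((-x + y) / 2) ^ (2*n) := by ring_nf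
          _ ≤ 1/2 := key
      have h2 : (y - x) / 2 ≤ c := by
        by_contra hcon
        push_neg at hcon
        have := pow_lt_pow_left₀ hcon hc0.le (by omega : 2*n ≠ 0)
        linarith
      linarith
  · rw [hnegpow, hcpow]; norm_num
  · rw [hpe]; ring
  · intro x y hxy heq
    rw [hpe] at heq
    have hyx : (y - x) / 2 = c := by linarith
    have hmid : ((-x + y) / 2) ^ (2*n) = ((-x) ^ (2*n) + y ^ (2*n)) / 2 := by
      rw [hnegpow x, hxy, show (-x + y)/2 = (y - x)/2 by ring, hyx, hcpow]
    have hxy2 : -x = y := midpt_pow_eq' n hn _ _ hmid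
    have hy : y = c := by
      have : y - x = 2 * y := by linarith [hxy2]
      rw [this] at heq; linarith
    exact ⟨by linarith [hxy2, hy], hy⟩
end

section
/- Let m ≥ 2 be a natural number. There is no point (x, y) on the unit circle x² + y² = 1 at which the tangent line to the unit circle passes through both (0, 2^(1/(2m))) and (-2^(1/(2m)), 0). Consequently the segment from (0, 2^(1/(2m))) to (-2^(1/(2m)), 0) is not tangent to the unit circle. -/
theorem stmt15 (m : ℕ) (hm : 2 ≤ m) :
    ¬ ∃ a b : ℝ, a^2 + b^2 = 1 ∧
      a * 0 + b * ((2:ℝ) ^ (1 / (2 * (m:ℝ)))) = 1 ∧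
      a * (-(2:ℝ) ^ (1 / (2 * (m:ℝ)))) + b * 0 = 1 := by
  rintro ⟨a, b, h1, h2, h3⟩
  set c : ℝ := (2:ℝ) ^ (1 / (2 * (m:ℝ))) with hc
  have hm0 : (0:ℝ) < m := by positivity
  have hc0 : 0 < c := Real.rpow_pos_of_pos (by norm_num) _
  have hb : b * c = 1 := by linarith
  have ha : a * c = -1 := by nlinarith
  have hcsq : c ^ 2 = 2 := by nlinarith [sq_nonneg c, sq_nonneg (a + b)]
  have hkey : c ^ 2 = (2:ℝ) ^ ((1:ℝ) / (m:ℝ)) := by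
    rw [hc, ← Real.rpow_natCast ((2:ℝ) ^ (1 / (2 * (m:ℝ)))) 2,
      ← Real.rpow_mul (by norm_num)]
    norm_num
    congr 1; ring
  have hlt : (2:ℝ) ^ ((1:ℝ) / (m:ℝ)) < 2 := by
    have : (1:ℝ) / (m:ℝ) < 1 := by
      rw [div_lt_one hm0]
      have : (2:ℝ) ≤ m := by exact_mod_cast hm
      linarith
    calc (2:ℝ) ^ ((1:ℝ) / (m:ℝ)) < (2:ℝ) ^ (1:ℝ) :=
          Real.rpow_lt_rpow_of_exponent_lt (by norm_num) this
      _ = 2 := Real.rpow_one 2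
  rw [hkey] at hcsq
  linarith
end
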